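/- Let H be a finite abelian group (written multiplicatively) and let q : ℕ → H → ℝ[x,x⁻¹] be such that each q_{j,g} has nonnegative coefficients and Σ_{g∈H} q_{j,g}(1) = 1 for every j. Suppose that for every maximal proper subgroup K of H the series Σ_j (Σ_{(g,h) ∈ H×H : g·h⁻¹ ∉ K} (q_{j,g} ∧ q_{j,h})(1)) diverges, where u ∧ v denotes the coefficientwise minimum of two Laurent polynomials with nonnegative coefficients. Then the sequence is hollow: for every character α ≠ 1 of H and every j₀ ≥ 0, the l¹ norms ‖∏_{j=j₀}^{j₀+d} p_{α,j}‖₁ tend to 0 as d → ∞, where p_{α,j} := Σ_{g∈H} α(g⁻¹)·q_{j,g} ∈ ℂ[x,x⁻¹]. -/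

import Mathlib

open Finsupp Filter

/-- The coefficients of a real Laurent polynomial. -/
def lcoeff (p : AddMonoidAlgebra ℝ ℤ) : ℤ →₀ ℝ := p.coeff

/-- The coefficients of a complex Laurent polynomial. -/
def lcoeffC (p : AddMonoidAlgebra ℂ ℤ) : ℤ →₀ ℂ := p.coeff

/-- The `l¹` norm of a complex Laurent polynomial. -/
noncomputable def l1C (p : AddMonoidAlgebra ℂ ℤ) : ℝ := (lcoeffC p).sum fun _ c => ‖c‖

/-- Evaluation of a real Laurent polynomial at `x = 1`. -/
noncomputable def ev1 (p : AddMonoidAlgebra ℝ ℤ) : ℝ := (lcoeff p).sum fun _ c => c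

/-- A real Laurent polynomial viewed as a complex Laurent polynomial. -/
noncomputable def toC (p : AddMonoidAlgebra ℝ ℤ) : AddMonoidAlgebra ℂ ℤ :=
  AddMonoidAlgebra.ofCoeff (Finsupp.mapRange (fun r : ℝ => (r : ℂ)) Complex.ofReal_zero (lcoeff p))

/-- `(u ∧ v)(1)`: the sum of the coefficientwise minima of two Laurent polynomials. -/
noncomputable def minev (u v : AddMonoidAlgebra ℝ ℤ) : ℝ :=
  ∑ m ∈ (lcoeff u).support ∪ (lcoeff v).support, min (lcoeff u m) (lcoeff v m)

/-! ### Auxiliary facts about the `l¹` norm -/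

lemma summable_norm_lcoeffC (p : AddMonoidAlgebra ℂ ℤ) : Summable (fun n => ‖lcoeffC p n‖) :=
  summable_of_ne_finset_zero (s := (lcoeffC p).support) (fun b hb => by
    rw [Finsupp.notMem_support_iff.mp hb, norm_zero])

lemma l1C_eq_tsum (p : AddMonoidAlgebra ℂ ℤ) : l1C p = ∑' n, ‖lcoeffC p n‖ := by
  rw [l1C, Finsupp.sum, eq_comm]
  exact tsum_eq_sum (fun b hb => by rw [Finsupp.notMem_support_iff.mp hb, norm_zero])

lemma l1C_nonneg (p : AddMonoidAlgebra ℂ ℤ) : 0 ≤ l1C p := by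
  rw [l1C, Finsupp.sum]; positivity

lemma l1C_zero : l1C (0 : AddMonoidAlgebra ℂ ℤ) = 0 := by
  simp [l1C, lcoeffC]

lemma l1C_single (a : ℤ) (b : ℂ) : l1C (AddMonoidAlgebra.single a b) = ‖b‖ := by
  rw [l1C]
  show (Finsupp.single a b).sum (fun _ c => ‖c‖) = ‖b‖
  rw [Finsupp.sum_single_index]; exact norm_zero

lemma l1C_single_mul (a : ℤ) (b : ℂ) (p : AddMonoidAlgebra ℂ ℤ) :
    l1C (AddMonoidAlgebra.single a b * p) = ‖b‖ * l1C p := by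
  rw [l1C_eq_tsum, l1C_eq_tsum]
  have : ∀ n : ℤ, lcoeffC (AddMonoidAlgebra.single a b * p) n = b * lcoeffC p (-a + n) := by
    intro n
    exact AddMonoidAlgebra.coeff_single_mul_apply p b a n
  simp_rw [this, norm_mul]
  rw [← tsum_mul_left]
  exact (Equiv.addLeft (-a)).tsum_eq (fun n => ‖b‖ * ‖lcoeffC p n‖)

lemma l1C_add_le (p q : AddMonoidAlgebra ℂ ℤ) : l1C (p + q) ≤ l1C p + l1C q := by
  rw [l1C_eq_tsum, l1C_eq_tsum, l1C_eq_tsum,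
    ← Summable.tsum_add (summable_norm_lcoeffC p) (summable_norm_lcoeffC q)]
  refine Summable.tsum_le_tsum (fun n => ?_) (summable_norm_lcoeffC _)
    ((summable_norm_lcoeffC p).add (summable_norm_lcoeffC q))
  exact norm_add_le _ _

lemma l1C_add_single (a : ℤ) (b : ℂ) (f : AddMonoidAlgebra ℂ ℤ) (ha : lcoeffC f a = 0) :
    l1C (AddMonoidAlgebra.single a b + f) = ‖b‖ + l1C f := by
  rw [l1C_eq_tsum, l1C_eq_tsum, ← l1C_single a b, l1C_eq_tsum,
    ← Summable.tsum_add (summable_norm_lcoeffC _) (summable_norm_lcoeffC _)]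
  congr 1
  funext n
  show ‖(Finsupp.single a b) n + lcoeffC f n‖ = ‖(Finsupp.single a b) n‖ + ‖lcoeffC f n‖
  rcases eq_or_ne n a with rfl | hn
  · rw [show lcoeffC f n = 0 from ha, add_zero, norm_zero, add_zero]
  · rw [Finsupp.single_eq_of_ne hn, zero_add, norm_zero, zero_add]

lemma l1C_mul_le (p q : AddMonoidAlgebra ℂ ℤ) : l1C (p * q) ≤ l1C p * l1C q := by
  induction p using AddMonoidAlgebra.induction with
  | zero =>
    rw [zero_mul, l1C_zero, zero_mul]
  | single_add a b f haf hb ih =>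
    rw [add_mul, l1C_add_single a b f (Finsupp.notMem_support_iff.mp haf)]
    refine le_trans (l1C_add_le _ _) ?_
    rw [l1C_single_mul, add_mul]
    exact add_le_add_right ih _

lemma l1C_one : l1C (1 : AddMonoidAlgebra ℂ ℤ) = 1 := by
  rw [show (1 : AddMonoidAlgebra ℂ ℤ) = AddMonoidAlgebra.single 0 1 from rfl,
    l1C_single, norm_one]

lemma l1C_prod_le {ι : Type*} (s : Finset ι) (P : ι → AddMonoidAlgebra ℂ ℤ) :
    l1C (∏ j ∈ s, P j) ≤ ∏ j ∈ s, l1C (P j) := by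
  classical
  induction s using Finset.cons_induction with
  | empty => simp [l1C_one]
  | cons x s' hx ih =>
    rw [Finset.prod_cons, Finset.prod_cons]
    calc l1C (P x * ∏ j ∈ s', P j) ≤ l1C (P x) * l1C (∏ j ∈ s', P j) := l1C_mul_le _ _
      _ ≤ l1C (P x) * ∏ j ∈ s', l1C (P j) :=
          mul_le_mul_of_nonneg_left ih (l1C_nonneg _)

/-! ### The pointwise coefficient estimate -/

lemma core_pointwise {H : Type} [Fintype H] (z : H → ℂ) (hz : ∀ g, ‖z g‖ = 1)
    (a : H → ℝ) (ha : ∀ g, 0 ≤ a g) (g h : H) (hgh : g ≠ h) :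
    ‖∑ x, z x * (a x : ℂ)‖ ≤ (∑ x, a x) - (2 - ‖z g + z h‖) * min (a g) (a h) := by
  classical
  set m : ℝ := min (a g) (a h) with hm
  have hm0 : 0 ≤ m := le_min (ha g) (ha h)
  have hma : m ≤ a g := min_le_left _ _
  have hmb : m ≤ a h := min_le_right _ _
  have hhg : h ∈ (Finset.univ : Finset H).erase g :=
    Finset.mem_erase.mpr ⟨Ne.symm hgh, Finset.mem_univ h⟩
  set S2 : Finset H := ((Finset.univ : Finset H).erase g).erase h with hS2
  have hsplitC : ∀ F : H → ℂ, ∑ x, F x = F g + (F h + ∑ x ∈ S2, F x) := by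
    intro F
    rw [← Finset.add_sum_erase _ F (Finset.mem_univ g), ← Finset.add_sum_erase _ F hhg]
  have hsplitR : ∀ F : H → ℝ, ∑ x, F x = F g + (F h + ∑ x ∈ S2, F x) := by
    intro F
    rw [← Finset.add_sum_erase _ F (Finset.mem_univ g), ← Finset.add_sum_erase _ F hhg]
  set R : ℂ := ∑ x ∈ S2, z x * (a x : ℂ) with hR
  have hRle : ‖R‖ ≤ ∑ x ∈ S2, a x := by
    refine (norm_sum_le _ _).trans ?_
    refine Finset.sum_le_sum (fun x _ => ?_)
    rw [norm_mul, hz x, one_mul, Complex.norm_real]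
    exact le_of_eq (Real.norm_of_nonneg (ha x))
  rw [hsplitC (fun x => z x * (a x : ℂ)), hsplitR a]
  have heq : z g * (a g : ℂ) + (z h * (a h : ℂ) + R)
      = z g * ((a g - m : ℝ) : ℂ) + z h * ((a h - m : ℝ) : ℂ) + ((z g + z h) * (m : ℝ) + R) := by
    push_cast
    ring
  rw [heq]
  have h1 : ‖z g * ((a g - m : ℝ) : ℂ) + z h * ((a h - m : ℝ) : ℂ) + ((z g + z h) * (m : ℝ) + R)‖
      ≤ ‖z g * ((a g - m : ℝ) : ℂ)‖ + ‖z h * ((a h - m : ℝ) : ℂ)‖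
        + (‖(z g + z h) * (m : ℝ)‖ + ‖R‖) :=
    (norm_add_le _ _).trans (add_le_add (norm_add_le _ _) (norm_add_le _ _))
  have e1 : ‖z g * ((a g - m : ℝ) : ℂ)‖ = a g - m := by
    rw [norm_mul, hz g, one_mul, Complex.norm_real, Real.norm_of_nonneg (by linarith)]
  have e2 : ‖z h * ((a h - m : ℝ) : ℂ)‖ = a h - m := by
    rw [norm_mul, hz h, one_mul, Complex.norm_real, Real.norm_of_nonneg (by linarith)]
  have e3 : ‖(z g + z h) * (m : ℝ)‖ = ‖z g + z h‖ * m := by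
    rw [norm_mul, Complex.norm_real, Real.norm_of_nonneg hm0]
  rw [e1, e2, e3] at h1
  have htri : ‖z g + z h‖ ≤ 2 := by
    have := norm_add_le (z g) (z h); rw [hz g, hz h] at this; linarith
  linarith

lemma coeff_sum {H : Type} [Fintype H] (qq : H → AddMonoidAlgebra ℝ ℤ) (z : H → ℂ) (n : ℤ) :
    lcoeffC (∑ g, z g • toC (qq g)) n = ∑ g, z g * ((lcoeff (qq g) n : ℝ) : ℂ) := by
  classical
  show (∑ g, z g • toC (qq g)).coeff n = _
  rw [AddMonoidAlgebra.coeff_sum, Finset.sum_apply']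
  refine Finset.sum_congr rfl (fun g _ => ?_)
  rw [AddMonoidAlgebra.coeff_smul, Finsupp.smul_apply, smul_eq_mul, toC, AddMonoidAlgebra.coeff_ofCoeff,
    Finsupp.mapRange_apply]

lemma key_bound {H : Type} [Fintype H] (qq : H → AddMonoidAlgebra ℝ ℤ)
    (hpos : ∀ g m, 0 ≤ lcoeff (qq g) m) (z : H → ℂ) (hz : ∀ g, ‖z g‖ = 1)
    (g h : H) (hgh : g ≠ h) :
    l1C (∑ g', z g' • toC (qq g'))
      ≤ (∑ g', ev1 (qq g')) - (2 - ‖z g + z h‖) * minev (qq g) (qq h) := by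
  classical
  set P := ∑ g', z g' • toC (qq g') with hP
  set T : Finset ℤ :=
    (lcoeffC P).support ∪ Finset.univ.sup (fun g' => (lcoeff (qq g')).support) with hT
  have hsub : ∀ g', (lcoeff (qq g')).support ⊆ T := fun g' =>
    Finset.le_iff_subset.mp
      ((Finset.le_sup (f := fun g'' => (lcoeff (qq g'')).support) (Finset.mem_univ g')).trans
        (Finset.le_iff_subset.mpr Finset.subset_union_right))
  have h1 : l1C P = ∑ n ∈ T, ‖lcoeffC P n‖ := by
    rw [l1C, Finsupp.sum]
    exact Finset.sum_subset Finset.subset_union_left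
      (fun x _ hx => by rw [Finsupp.notMem_support_iff.mp hx, norm_zero])
  have h2 : ∀ g', ev1 (qq g') = ∑ n ∈ T, lcoeff (qq g') n := fun g' => by
    rw [ev1, Finsupp.sum]
    exact Finset.sum_subset (hsub g') (fun x _ hx => Finsupp.notMem_support_iff.mp hx)
  have h3 : minev (qq g) (qq h) = ∑ n ∈ T, min (lcoeff (qq g) n) (lcoeff (qq h) n) := by
    rw [minev]
    refine Finset.sum_subset (Finset.union_subset (hsub g) (hsub h)) (fun x _ hx => ?_)
    rw [Finset.mem_union, not_or] at hx
    rw [Finsupp.notMem_support_iff.mp hx.1, Finsupp.notMem_support_iff.mp hx.2, min_self]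
  have key : ∀ n, ‖lcoeffC P n‖ ≤ (∑ g', lcoeff (qq g') n)
      - (2 - ‖z g + z h‖) * min (lcoeff (qq g) n) (lcoeff (qq h) n) := fun n => by
    rw [hP, coeff_sum]
    exact core_pointwise z hz (fun g' => lcoeff (qq g') n) (fun g' => hpos g' n) g h hgh
  calc l1C P = ∑ n ∈ T, ‖lcoeffC P n‖ := h1
    _ ≤ ∑ n ∈ T, ((∑ g', lcoeff (qq g') n)
        - (2 - ‖z g + z h‖) * min (lcoeff (qq g) n) (lcoeff (qq h) n)) :=
      Finset.sum_le_sum (fun n _ => key n)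
    _ = (∑ n ∈ T, ∑ g', lcoeff (qq g') n)
        - (2 - ‖z g + z h‖) * ∑ n ∈ T, min (lcoeff (qq g) n) (lcoeff (qq h) n) := by
      rw [Finset.sum_sub_distrib, Finset.mul_sum]
    _ = (∑ g', ev1 (qq g')) - (2 - ‖z g + z h‖) * minev (qq g) (qq h) := by
      rw [Finset.sum_comm, ← h3]
      congr 1
      exact Finset.sum_congr rfl (fun g' _ => (h2 g').symm)

/-! ### Characters -/

lemma char_norm_one {H : Type} [Group H] [Fintype H] (α : H →* ℂ) (g : H) : ‖α g‖ = 1 := by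
  have hpow : (α g) ^ Fintype.card H = 1 := by
    rw [← map_pow, pow_card_eq_one, map_one]
  have hn : ‖α g‖ ^ Fintype.card H = 1 := by
    rw [← norm_pow, hpow, norm_one]
  have hcard : Fintype.card H ≠ 0 := Fintype.card_ne_zero
  rcases lt_trichotomy ‖α g‖ 1 with hlt | heq | hgt
  · exact absurd hn (by have := pow_lt_one₀ (norm_nonneg _) hlt hcard; linarith)
  · exact heq
  · exact absurd hn (by have := one_lt_pow₀ hgt hcard; linarith)

lemma norm_add_lt_two {z w : ℂ} (hz : ‖z‖ = 1) (hw : ‖w‖ = 1) (hzw : z ≠ w) : ‖z + w‖ < 2 := by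
  have hz2 : z.re ^ 2 + z.im ^ 2 = 1 := by
    have : ‖z‖ ^ 2 = 1 := by rw [hz]; norm_num
    rwa [Complex.sq_norm, Complex.normSq_apply, ← pow_two, ← pow_two] at this
  have hw2 : w.re ^ 2 + w.im ^ 2 = 1 := by
    have : ‖w‖ ^ 2 = 1 := by rw [hw]; norm_num
    rwa [Complex.sq_norm, Complex.normSq_apply, ← pow_two, ← pow_two] at this
  have hne : z.re ≠ w.re ∨ z.im ≠ w.im := by
    by_contra hcon
    push_neg at hcon
    exact hzw (Complex.ext hcon.1 hcon.2)
  have hpos : 0 < (z.re - w.re) ^ 2 + (z.im - w.im) ^ 2 := by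
    rcases hne with h | h
    · have := sq_pos_of_ne_zero (sub_ne_zero.mpr h); nlinarith [sq_nonneg (z.im - w.im)]
    · have := sq_pos_of_ne_zero (sub_ne_zero.mpr h); nlinarith [sq_nonneg (z.re - w.re)]
  have hsq : ‖z + w‖ ^ 2 < 4 := by
    have : ‖z + w‖ ^ 2 = (z.re + w.re) ^ 2 + (z.im + w.im) ^ 2 := by
      rw [Complex.sq_norm, Complex.normSq_apply, Complex.add_re,
        Complex.add_im, ← pow_two, ← pow_two]
    rw [this]
    nlinarith
  nlinarith [norm_nonneg (z + w)]

open scoped Classical in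
/-- Lemma 2.2 (a Mineka-type hollowness criterion): if for every maximal proper subgroup
`K` of `H` the series `∑_j ∑_{gh⁻¹ ∉ K} (q_{j,g} ∧ q_{j,h})(1)` diverges, then the
sequence is hollow: for every nontrivial character `α` the `l¹` norms of the products
of eigenvalue polynomials `∏_{j=j₀}^{j₀+d} p_{α,j}` tend to `0`. -/
theorem mineka_hollowness_criterion {H : Type} [CommGroup H] [Fintype H]
    (q : ℕ → H → AddMonoidAlgebra ℝ ℤ)
    (hpos : ∀ j g m, 0 ≤ lcoeff (q j g) m)
    (hsum : ∀ j, ∑ g, ev1 (q j g) = 1)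
    (hdiv : ∀ K : Subgroup H, IsCoatom K →
      ¬ Summable (fun j => ∑ g, ∑ h,
        if g * h⁻¹ ∈ K then 0 else minev (q j g) (q j h))) :
    ∀ α : H →* ℂ, α ≠ 1 → ∀ j₀ : ℕ,
      Tendsto
        (fun d => l1C (∏ j ∈ Finset.Icc j₀ (j₀ + d), ∑ g, α g⁻¹ • toC (q j g)))
        atTop (nhds 0) := by
  intro α hα j₀
  -- the character has unit norm everywhere
  have hz : ∀ g : H, ‖α g⁻¹‖ = 1 := fun g => char_norm_one α g⁻¹
  -- a maximal subgroup above the kernel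
  have hker : MonoidHom.ker α ≠ ⊤ := by
    intro htop
    apply hα
    ext g
    have : g ∈ MonoidHom.ker α := htop ▸ Subgroup.mem_top g
    simpa [MonoidHom.mem_ker] using this
  obtain ⟨K, hK, hleK⟩ : ∃ K : Subgroup H, IsCoatom K ∧ MonoidHom.ker α ≤ K := by
    rcases eq_top_or_exists_le_coatom (MonoidHom.ker α) with h' | ⟨K, hK, hle⟩
    · exact absurd h' hker
    · exact ⟨K, hK, hle⟩
  -- if `g h⁻¹ ∉ K` then the character separates `g⁻¹` and `h⁻¹`
  have hsep : ∀ g h : H, g * h⁻¹ ∉ K → α g⁻¹ ≠ α h⁻¹ := by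
    intro g h hgh heq
    apply hgh
    apply hleK
    rw [MonoidHom.mem_ker, map_mul]
    have h1 : α g⁻¹ * α g = 1 := by rw [← map_mul, inv_mul_cancel, map_one]
    have h2 : α h⁻¹ * α h = 1 := by rw [← map_mul, inv_mul_cancel, map_one]
    rw [heq] at h1
    calc α g * α h⁻¹ = α g * (α h⁻¹ * α h) * α h⁻¹ := by rw [h2, mul_one]
      _ = (α h⁻¹ * α g) * (α h * α h⁻¹) := by ring
      _ = 1 * (α h * α h⁻¹) := by rw [h1]
      _ = 1 := by rw [one_mul, mul_comm, h2]
  -- the series terms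
  set f : ℕ → ℝ := fun j => ∑ g, ∑ h,
    if g * h⁻¹ ∈ K then 0 else minev (q j g) (q j h) with hf
  have hminev : ∀ j g h, 0 ≤ minev (q j g) (q j h) := fun j g h =>
    Finset.sum_nonneg (fun n _ => le_min (hpos j g n) (hpos j h n))
  have hf0 : ∀ j, 0 ≤ f j := fun j =>
    Finset.sum_nonneg fun g _ => Finset.sum_nonneg fun h _ => by
      split <;> [exact le_rfl; exact hminev j g h]
  have hdivK : ¬ Summable f := hdiv K hK
  -- the nonempty finite set of "bad" pairs
  set s : Finset (H × H) := Finset.univ.filter (fun p : H × H => p.1 * p.2⁻¹ ∉ K) with hs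
  have hsne : s.Nonempty := by
    obtain ⟨g, hg⟩ : ∃ g : H, g ∉ K := by
      by_contra hcon
      push_neg at hcon
      exact hK.1 ((Subgroup.eq_top_iff' K).mpr hcon)
    exact ⟨(g, 1), Finset.mem_filter.mpr ⟨Finset.mem_univ _, by simpa using hg⟩⟩
  set c : ℝ := s.inf' hsne (fun p => 2 - ‖α p.1⁻¹ + α p.2⁻¹‖) with hc
  have hcpos : 0 < c := by
    rw [hc, Finset.lt_inf'_iff]
    intro p hp
    have hpK : p.1 * p.2⁻¹ ∉ K := (Finset.mem_filter.mp hp).2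
    have := norm_add_lt_two (hz p.1) (hz p.2) (hsep p.1 p.2 hpK)
    linarith
  set N : ℝ := (Fintype.card (H × H) : ℝ) with hN
  have hNpos : 0 < N := by
    rw [hN]
    exact_mod_cast Fintype.card_pos
  -- selection of a good pair for each j
  have hsel : ∀ j, ∃ p : H × H, p ∈ s ∧ f j ≤ N * minev (q j p.1) (q j p.2) := by
    intro j
    obtain ⟨p, hp, hpM⟩ := Finset.exists_mem_eq_sup' hsne (fun p => minev (q j p.1) (q j p.2))
    refine ⟨p, hp, ?_⟩
    have hM0 : 0 ≤ minev (q j p.1) (q j p.2) := hminev j p.1 p.2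
    have hfj : f j = ∑ x : H × H,
        (if x.1 * x.2⁻¹ ∈ K then 0 else minev (q j x.1) (q j x.2)) := by
      rw [Fintype.sum_prod_type]
    have hle : ∀ x ∈ (Finset.univ : Finset (H × H)),
        (if x.1 * x.2⁻¹ ∈ K then 0 else minev (q j x.1) (q j x.2))
          ≤ minev (q j p.1) (q j p.2) := by
      intro x _
      split
      · exact hM0
      · rename_i hxK
        have hxs : x ∈ s := Finset.mem_filter.mpr ⟨Finset.mem_univ _, hxK⟩
        have := Finset.le_sup' (fun p => minev (q j p.1) (q j p.2)) hxs
        rw [← hpM]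
        exact this
    calc f j ≤ ∑ _x : H × H, minev (q j p.1) (q j p.2) := by
          rw [hfj]; exact Finset.sum_le_sum hle
      _ = N * minev (q j p.1) (q j p.2) := by
          rw [Finset.sum_const, nsmul_eq_mul, hN, Finset.card_univ]
  -- the per-factor bound
  set ε : ℕ → ℝ := fun j => (c / N) * f j with hε
  have hε0 : ∀ j, 0 ≤ ε j := fun j =>
    mul_nonneg (div_nonneg hcpos.le hNpos.le) (hf0 j)
  have hbound : ∀ j, l1C (∑ g, α g⁻¹ • toC (q j g)) ≤ 1 - ε j := by
    intro j
    obtain ⟨p, hp, hple⟩ := hsel j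
    have hpK : p.1 * p.2⁻¹ ∉ K := (Finset.mem_filter.mp hp).2
    have hne : p.1 ≠ p.2 := by
      intro hcon
      apply hpK
      rw [hcon, mul_inv_cancel]
      exact K.one_mem
    have hkey := key_bound (q j) (hpos j) (fun g => α g⁻¹) hz p.1 p.2 hne
    rw [hsum j] at hkey
    refine hkey.trans ?_
    have h₁ : c ≤ 2 - ‖α p.1⁻¹ + α p.2⁻¹‖ := Finset.inf'_le _ hp
    have h₂ : f j / N ≤ minev (q j p.1) (q j p.2) := by
      rw [div_le_iff₀ hNpos]
      linarith [hple]
    have h₃ : 0 ≤ f j / N := div_nonneg (hf0 j) hNpos.le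
    have h₄ : c * (f j / N) ≤ (2 - ‖α p.1⁻¹ + α p.2⁻¹‖) * minev (q j p.1) (q j p.2) :=
      mul_le_mul h₁ h₂ h₃ (hcpos.le.trans h₁)
    have : ε j = c * (f j / N) := by rw [hε]; ring
    linarith [this ▸ h₄]
  have hone : ∀ j, 0 ≤ 1 - ε j := fun j => (l1C_nonneg _).trans (hbound j)
  -- the product bound
  have hprod : ∀ d, l1C (∏ j ∈ Finset.Icc j₀ (j₀ + d), ∑ g, α g⁻¹ • toC (q j g))
      ≤ Real.exp (-(∑ j ∈ Finset.Icc j₀ (j₀ + d), ε j)) := by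
    intro d
    calc l1C (∏ j ∈ Finset.Icc j₀ (j₀ + d), ∑ g, α g⁻¹ • toC (q j g))
        ≤ ∏ j ∈ Finset.Icc j₀ (j₀ + d), l1C (∑ g, α g⁻¹ • toC (q j g)) := l1C_prod_le _ _
      _ ≤ ∏ j ∈ Finset.Icc j₀ (j₀ + d), (1 - ε j) :=
          Finset.prod_le_prod (fun j _ => l1C_nonneg _) (fun j _ => hbound j)
      _ ≤ ∏ j ∈ Finset.Icc j₀ (j₀ + d), Real.exp (-(ε j)) :=
          Finset.prod_le_prod (fun j _ => hone j)
            (fun j _ => by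
              have := Real.add_one_le_exp (-(ε j)); linarith)
      _ = Real.exp (-(∑ j ∈ Finset.Icc j₀ (j₀ + d), ε j)) := by
          rw [← Real.exp_sum, Finset.sum_neg_distrib]
  -- divergence of the partial sums
  have hsumdiv : Tendsto (fun n => ∑ j ∈ Finset.range n, f j) atTop atTop :=
    (not_summable_iff_tendsto_nat_atTop_of_nonneg hf0).mp hdivK
  have hIcc : ∀ d, ∑ j ∈ Finset.Icc j₀ (j₀ + d), f j
      = ∑ j ∈ Finset.range (j₀ + d + 1), f j - ∑ j ∈ Finset.range j₀, f j := by
    intro d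
    have h0 : Finset.Icc j₀ (j₀ + d) = Finset.Ico j₀ (j₀ + d + 1) := by
      rw [Finset.Ico_add_one_right_eq_Icc]
    rw [h0, Finset.range_eq_Ico, Finset.range_eq_Ico, eq_sub_iff_add_eq, add_comm]
    exact Finset.sum_Ico_consecutive f (Nat.zero_le j₀) (by omega : j₀ ≤ j₀ + d + 1)
  have hT1 : Tendsto (fun d => ∑ j ∈ Finset.Icc j₀ (j₀ + d), f j) atTop atTop := by
    have base : Tendsto (fun d : ℕ => ∑ j ∈ Finset.range (j₀ + d + 1), f j) atTop atTop := by
      have comp : Tendsto (fun d : ℕ => j₀ + d + 1) atTop atTop :=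
        (tendsto_add_atTop_nat (j₀ + 1)).congr (fun d => by omega)
      exact hsumdiv.comp comp
    have := tendsto_atTop_add_const_right atTop (-(∑ j ∈ Finset.range j₀, f j)) base
    refine this.congr (fun d => ?_)
    rw [hIcc d]
    ring
  have hT2 : Tendsto (fun d => ∑ j ∈ Finset.Icc j₀ (j₀ + d), ε j) atTop atTop := by
    have heq : ∀ d, ∑ j ∈ Finset.Icc j₀ (j₀ + d), ε j
        = (c / N) * ∑ j ∈ Finset.Icc j₀ (j₀ + d), f j := by
      intro d
      rw [Finset.mul_sum]
    have := hT1.const_mul_atTop (div_pos hcpos hNpos)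
    exact this.congr (fun d => (heq d).symm)
  have hT3 : Tendsto (fun d => Real.exp (-(∑ j ∈ Finset.Icc j₀ (j₀ + d), ε j)))
      atTop (nhds 0) :=
    Real.tendsto_exp_atBot.comp (tendsto_neg_atTop_atBot.comp hT2)
  exact squeeze_zero (fun d => l1C_nonneg _) hprod hT3
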